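/- arXiv:1506.07974 — 2 statements merged into one kernel-verified Lean document; each statement's English description precedes it below -/
import Mathlib

section
/- If g(t) ~ c·t^{k-1} as t → 0⁺ (with c, k > 0), then G̃(s) ~ c·Γ(k)·s^{-k} as s → ∞, where G̃(s) = ∫₀^∞ e^{-st} g(t) dt. (Watson's lemma / Tauberian asymptotics.) -/
open MeasureTheory Set Real Filter

set_option maxHeartbeats 2000000 in
theorem laplace_transform_large_s_asymptotics (g : ℝ → ℝ) (c k : ℝ)
    (hc : 0 < c) (hk : 0 < k)
    (hnn : ∀ t ∈ Ioi (0:ℝ), 0 ≤ g t)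
    (hg : IntegrableOn g (Ioi 0))
    (hasym : Tendsto (fun t => g t / (c * t ^ (k - 1))) (nhdsWithin 0 (Ioi 0)) (nhds 1)) :
    Tendsto (fun s : ℝ => s ^ k * ∫ t in Ioi (0:ℝ), Real.exp (-s * t) * g t)
      atTop (nhds (c * Real.Gamma k)) := by
  have hGamma : 0 < Real.Gamma k := Real.Gamma_pos_of_pos hk
  have hL : 0 < c * Real.Gamma k := mul_pos hc hGamma
  rw [Metric.tendsto_nhds]
  intro ε hε
  set ε' := ε / (3 * (c * Real.Gamma k)) with hε'def
  have hε' : 0 < ε' := by positivity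
  have hε'L : ε' * (c * Real.Gamma k) = ε / 3 := by
    rw [hε'def]; field_simp
  obtain ⟨δ, hδ, hδ'⟩ := (Metric.tendsto_nhdsWithin_nhds.mp hasym) ε' hε'
  -- pointwise bound near 0
  have key : ∀ t ∈ Ioo (0:ℝ) δ, |g t - c * t ^ (k - 1)| ≤ ε' * (c * t ^ (k - 1)) := by
    intro t ht
    have ht0 : 0 < t := ht.1
    have hp : 0 < c * t ^ (k - 1) := by positivity
    have h1 := hδ' (mem_Ioi.mpr ht0)
      (by rw [Real.dist_eq, sub_zero, abs_of_pos ht0]; exact ht.2)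
    rw [Real.dist_eq] at h1
    have h2 : g t / (c * t ^ (k - 1)) - 1 = (g t - c * t ^ (k - 1)) / (c * t ^ (k - 1)) := by
      field_simp
    rw [h2] at h1
    have h3 := mul_le_mul_of_nonneg_right h1.le hp.le
    rwa [abs_div, abs_of_pos hp, div_mul_cancel₀ _ hp.ne'] at h3
  have hIci : Ici δ ⊆ Ioi (0:ℝ) := fun x hx => lt_of_lt_of_le hδ hx
  have hIoo : Ioo (0:ℝ) δ ⊆ Ioi (0:ℝ) := Ioo_subset_Ioi_self
  have hdisj : Disjoint (Ioo (0:ℝ) δ) (Ici δ) :=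
    Set.disjoint_left.mpr fun x hx hx2 => absurd hx2 (not_le.mpr hx.2)
  have hgnn : 0 ≤ᵐ[volume.restrict (Ioi (0:ℝ))] g :=
    (ae_restrict_iff' measurableSet_Ioi).2 (ae_of_all _ hnn)
  have hIg : (0:ℝ) ≤ ∫ t in Ioi (0:ℝ), g t := integral_nonneg_of_ae hgnn
  -- tail smallness
  have Mlim : Tendsto (fun s : ℝ =>
      (s ^ k * Real.exp (-(δ/2) * s)) * (c * Real.Gamma k + ∫ t in Ioi (0:ℝ), g t))
      atTop (nhds 0) := by
    have := (tendsto_rpow_mul_exp_neg_mul_atTop_nhds_zero k (δ/2) (by positivity)).mul_const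
      (c * Real.Gamma k + ∫ t in Ioi (0:ℝ), g t)
    simpa using this
  have h3 : ∀ᶠ s in atTop,
      (s ^ k * Real.exp (-(δ/2) * s)) * (c * Real.Gamma k + ∫ t in Ioi (0:ℝ), g t) < ε / 3 :=
    Mlim.eventually (gt_mem_nhds (by positivity : (0:ℝ) < ε / 3))
  filter_upwards [h3, eventually_ge_atTop (2:ℝ)] with s hs3 hs2
  have hs0 : (0:ℝ) < s := by linarith
  have hs1 : (1:ℝ) ≤ s := by linarith
  have hsk : (0:ℝ) < s ^ k := Real.rpow_pos_of_pos hs0 k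
  have hcont : Continuous fun t : ℝ => Real.exp (-s * t) := by continuity
  have hmg : AEStronglyMeasurable g (volume.restrict (Ioi (0:ℝ))) := hg.aestronglyMeasurable
  -- integrability of the Laplace integrand
  have hint_g : IntegrableOn (fun t => Real.exp (-s * t) * g t) (Ioi 0) := by
    refine Integrable.mono hg (hcont.aestronglyMeasurable.mul hmg) ?_
    refine (ae_restrict_iff' measurableSet_Ioi).2 (ae_of_all _ fun t ht => ?_)
    simp only [norm_mul, Real.norm_eq_abs]
    rw [abs_of_pos (Real.exp_pos _)]
    have : Real.exp (-s * t) ≤ 1 := by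
      rw [← Real.exp_zero]
      apply Real.exp_le_exp.mpr
      have := mem_Ioi.mp ht
      nlinarith
    nlinarith [abs_nonneg (g t)]
  have hint_p : IntegrableOn (fun t => Real.exp (-s * t) * t ^ (k - 1)) (Ioi 0) := by
    refine Integrable.mono (Real.GammaIntegral_convergent hk)
      (((hcont.continuousOn).mul (continuousOn_id.rpow_const
        fun x hx => Or.inl (ne_of_gt hx))).aestronglyMeasurable measurableSet_Ioi) ?_
    refine (ae_restrict_iff' measurableSet_Ioi).2 (ae_of_all _ fun t ht => ?_)
    have ht0 : (0:ℝ) < t := mem_Ioi.mp ht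
    have htp : (0:ℝ) ≤ t ^ (k - 1) := Real.rpow_nonneg ht0.le _
    simp only [norm_mul, Real.norm_eq_abs]
    rw [abs_of_pos (Real.exp_pos _), abs_of_pos (Real.exp_pos _),
      abs_of_nonneg htp]
    have : Real.exp (-s * t) ≤ Real.exp (-t) := by
      apply Real.exp_le_exp.mpr
      nlinarith
    nlinarith
  -- value of the model integral
  have hmodel : (∫ t in Ioi (0:ℝ), Real.exp (-s * t) * t ^ (k - 1))
      = (1 / s) ^ k * Real.Gamma k := by
    rw [← Real.integral_rpow_mul_exp_neg_mul_Ioi hk hs0]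
    refine setIntegral_congr_fun measurableSet_Ioi fun t _ => ?_
    rw [mul_comm, neg_mul]
  have hPQΓ : s ^ k * ∫ t in Ioi (0:ℝ), Real.exp (-s * t) * t ^ (k - 1) = Real.Gamma k := by
    rw [hmodel, ← mul_assoc, ← Real.mul_rpow hs0.le (by positivity), mul_one_div,
      div_self hs0.ne', Real.one_rpow, one_mul]
  -- split integrals at δ
  have hsplit : ∀ f : ℝ → ℝ, IntegrableOn f (Ioi 0) →
      (∫ t in Ioi (0:ℝ), f t) = (∫ t in Ioo (0:ℝ) δ, f t) + ∫ t in Ici δ, f t := by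
    intro f hf
    rw [← Set.Ioo_union_Ici_eq_Ioi hδ]
    exact setIntegral_union hdisj measurableSet_Ici (hf.mono_set hIoo) (hf.mono_set hIci)
  set A := ∫ t in Ioo (0:ℝ) δ, Real.exp (-s * t) * g t with hAdef
  set B := ∫ t in Ici δ, Real.exp (-s * t) * g t with hBdef
  set P := ∫ t in Ioo (0:ℝ) δ, Real.exp (-s * t) * t ^ (k - 1) with hPdef
  set Q := ∫ t in Ici δ, Real.exp (-s * t) * t ^ (k - 1) with hQdef
  have hgs : (∫ t in Ioi (0:ℝ), Real.exp (-s * t) * g t) = A + B :=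
    hsplit _ hint_g
  have hps : (∫ t in Ioi (0:ℝ), Real.exp (-s * t) * t ^ (k - 1)) = P + Q :=
    hsplit _ hint_p
  have hPnn : (0:ℝ) ≤ P := by
    refine setIntegral_nonneg measurableSet_Ioo fun t ht => ?_
    have ht0 : (0:ℝ) < t := hIoo ht
    positivity
  have hQnn : (0:ℝ) ≤ Q := by
    refine setIntegral_nonneg measurableSet_Ici fun t ht => ?_
    have ht0 : (0:ℝ) < t := hIci ht
    positivity
  have hBnn : (0:ℝ) ≤ B := by
    refine setIntegral_nonneg measurableSet_Ici fun t ht => ?_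
    have h1 := hnn t (hIci ht)
    positivity
  -- main estimate on (0, δ)
  have hAcP : |A - c * P| ≤ ε' * (c * P) := by
    have hint1 : IntegrableOn (fun t => Real.exp (-s * t) * g t) (Ioo 0 δ) :=
      hint_g.mono_set hIoo
    have hint2 : IntegrableOn (fun t => Real.exp (-s * t) * t ^ (k - 1)) (Ioo 0 δ) :=
      hint_p.mono_set hIoo
    have heq : A - c * P = ∫ t in Ioo (0:ℝ) δ,
        Real.exp (-s * t) * (g t - c * t ^ (k - 1)) := by
      have : (∫ t in Ioo (0:ℝ) δ, Real.exp (-s * t) * (g t - c * t ^ (k - 1)))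
          = (∫ t in Ioo (0:ℝ) δ, Real.exp (-s * t) * g t)
            - ∫ t in Ioo (0:ℝ) δ, c * (Real.exp (-s * t) * t ^ (k - 1)) := by
        rw [← integral_sub hint1 (hint2.const_mul c)]
        refine setIntegral_congr_fun measurableSet_Ioo fun t _ => ?_
        ring
      rw [this, integral_const_mul]
    rw [heq]
    have hbound : ∀ t ∈ Ioo (0:ℝ) δ,
        ‖Real.exp (-s * t) * (g t - c * t ^ (k - 1))‖
          ≤ (ε' * c) * (Real.exp (-s * t) * t ^ (k - 1)) := by
      intro t ht
      have ht0 : 0 < t := ht.1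
      rw [norm_mul, Real.norm_eq_abs, Real.norm_eq_abs, abs_of_pos (Real.exp_pos _)]
      have h1 := key t ht
      calc Real.exp (-s * t) * |g t - c * t ^ (k - 1)|
          ≤ Real.exp (-s * t) * (ε' * (c * t ^ (k - 1))) := by
            exact mul_le_mul_of_nonneg_left h1 (Real.exp_pos _).le
        _ = (ε' * c) * (Real.exp (-s * t) * t ^ (k - 1)) := by ring
    have := norm_integral_le_of_norm_le
      ((hint2.const_mul (ε' * c)))
      ((ae_restrict_iff' measurableSet_Ioo).2 (ae_of_all _ hbound))
    rw [Real.norm_eq_abs] at this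
    calc |∫ t in Ioo (0:ℝ) δ, Real.exp (-s * t) * (g t - c * t ^ (k - 1))|
        ≤ ∫ t in Ioo (0:ℝ) δ, (ε' * c) * (Real.exp (-s * t) * t ^ (k - 1)) := this
      _ = ε' * (c * P) := by rw [integral_const_mul]; ring
  -- tail estimate for B
  have hB : B ≤ Real.exp (-(δ/2) * s) * ∫ t in Ioi (0:ℝ), g t := by
    calc B ≤ ∫ t in Ici δ, Real.exp (-(δ/2) * s) * g t := by
          refine setIntegral_mono_on (hint_g.mono_set hIci)
            ((hg.mono_set hIci).const_mul _) measurableSet_Ici fun t ht => ?_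
          have ht' : δ ≤ t := ht
          have hgt := hnn t (hIci ht)
          have : Real.exp (-s * t) ≤ Real.exp (-(δ/2) * s) := by
            apply Real.exp_le_exp.mpr
            have h1 : s * δ ≤ s * t := mul_le_mul_of_nonneg_left ht' hs0.le
            have h2 : (0:ℝ) ≤ (δ/2) * s := by positivity
            linarith
          exact mul_le_mul_of_nonneg_right this hgt
      _ = Real.exp (-(δ/2) * s) * ∫ t in Ici δ, g t := integral_const_mul _ _
      _ ≤ Real.exp (-(δ/2) * s) * ∫ t in Ioi (0:ℝ), g t := by
          refine mul_le_mul_of_nonneg_left ?_ (Real.exp_pos _).le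
          exact setIntegral_mono_set hg hgnn (HasSubset.Subset.eventuallyLE hIci)
  -- tail estimate for Q
  have hQ : Q ≤ Real.exp (-(δ/2) * s) * Real.Gamma k := by
    have hGint : (∫ t in Ioi (0:ℝ), Real.exp (-t) * t ^ (k - 1)) = Real.Gamma k :=
      (Real.Gamma_eq_integral hk).symm
    have hGconv := Real.GammaIntegral_convergent hk
    calc Q ≤ ∫ t in Ici δ, Real.exp (-(δ/2) * s) * (Real.exp (-t) * t ^ (k - 1)) := by
          refine setIntegral_mono_on (hint_p.mono_set hIci)
            ((hGconv.mono_set hIci).const_mul _) measurableSet_Ici fun t ht => ?_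
          have ht' : δ ≤ t := ht
          have ht0 : 0 < t := hIci ht
          have htp : (0:ℝ) ≤ t ^ (k - 1) := Real.rpow_nonneg ht0.le _
          have hexp : Real.exp (-s * t) ≤ Real.exp (-(δ/2) * s) * Real.exp (-t) := by
            rw [← Real.exp_add]
            apply Real.exp_le_exp.mpr
            nlinarith [mul_nonneg (by linarith : (0:ℝ) ≤ s - 2)
              (by linarith : (0:ℝ) ≤ t - δ/2)]
          calc Real.exp (-s * t) * t ^ (k - 1)
              ≤ (Real.exp (-(δ/2) * s) * Real.exp (-t)) * t ^ (k - 1) :=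
                mul_le_mul_of_nonneg_right hexp htp
            _ = Real.exp (-(δ/2) * s) * (Real.exp (-t) * t ^ (k - 1)) := by ring
      _ = Real.exp (-(δ/2) * s) * ∫ t in Ici δ, Real.exp (-t) * t ^ (k - 1) :=
          integral_const_mul _ _
      _ ≤ Real.exp (-(δ/2) * s) * Real.Gamma k := by
          refine mul_le_mul_of_nonneg_left ?_ (Real.exp_pos _).le
          rw [← hGint]
          refine setIntegral_mono_set hGconv ?_ (HasSubset.Subset.eventuallyLE hIci)
          refine (ae_restrict_iff' measurableSet_Ioi).2 (ae_of_all _ fun t ht => ?_)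
          have ht0 : 0 < t := mem_Ioi.mp ht
          positivity
  -- assemble
  rw [Real.dist_eq, hgs]
  have hΓsplit : c * Real.Gamma k = c * (s ^ k * P) + c * (s ^ k * Q) := by
    rw [← hPQΓ, hps]; ring
  have habs : |s ^ k * (A + B) - c * Real.Gamma k|
      ≤ s ^ k * |A - c * P| + s ^ k * B + c * (s ^ k * Q) := by
    rw [hΓsplit]
    have : s ^ k * (A + B) - (c * (s ^ k * P) + c * (s ^ k * Q))
        = s ^ k * (A - c * P) + s ^ k * B - c * (s ^ k * Q) := by ring
    rw [this]
    calc |s ^ k * (A - c * P) + s ^ k * B - c * (s ^ k * Q)|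
        ≤ |s ^ k * (A - c * P) + s ^ k * B| + |c * (s ^ k * Q)| := abs_sub _ _
      _ ≤ |s ^ k * (A - c * P)| + |s ^ k * B| + |c * (s ^ k * Q)| := by
          gcongr; exact abs_add_le _ _
      _ = s ^ k * |A - c * P| + s ^ k * B + c * (s ^ k * Q) := by
          rw [abs_mul, abs_of_pos hsk, abs_of_nonneg (mul_nonneg hsk.le hBnn),
            abs_of_nonneg (mul_nonneg hc.le (mul_nonneg hsk.le hQnn))]
  have hterm1 : s ^ k * |A - c * P| ≤ ε / 3 := by
    calc s ^ k * |A - c * P| ≤ s ^ k * (ε' * (c * P)) :=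
          mul_le_mul_of_nonneg_left hAcP hsk.le
      _ ≤ ε' * (c * (s ^ k * (P + Q))) := by
          have h0 : 0 ≤ ε' * (c * (s ^ k * Q)) :=
            mul_nonneg hε'.le (mul_nonneg hc.le (mul_nonneg hsk.le hQnn))
          linarith
      _ = ε' * (c * Real.Gamma k) := by rw [← hps, hPQΓ]
      _ = ε / 3 := hε'L
  have hterm2 : s ^ k * B + c * (s ^ k * Q)
      ≤ (s ^ k * Real.exp (-(δ/2) * s)) * (c * Real.Gamma k + ∫ t in Ioi (0:ℝ), g t) := by
    have h1 : s ^ k * B ≤ s ^ k * (Real.exp (-(δ/2) * s) * ∫ t in Ioi (0:ℝ), g t) :=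
      mul_le_mul_of_nonneg_left hB hsk.le
    have h2 : c * (s ^ k * Q) ≤ c * (s ^ k * (Real.exp (-(δ/2) * s) * Real.Gamma k)) := by
      refine mul_le_mul_of_nonneg_left (mul_le_mul_of_nonneg_left hQ hsk.le) hc.le
    nlinarith
  calc |s ^ k * (A + B) - c * Real.Gamma k|
      ≤ s ^ k * |A - c * P| + s ^ k * B + c * (s ^ k * Q) := habs
    _ ≤ ε / 3 + (s ^ k * Real.exp (-(δ/2) * s)) * (c * Real.Gamma k + ∫ t in Ioi (0:ℝ), g t) := by
        linarith
    _ < ε / 3 + ε / 3 := by linarith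
    _ < ε := by linarith
end

section
/- If g(t) ~ c·t^{k-1} as t → 0⁺, then the expected Waxman edge length satisfies h(s) = ∫ t g(t)e^{-st}dt / ∫ g(t)e^{-st}dt ~ k/s as s → ∞. -/
open MeasureTheory Set Real Filter

lemma laplace_key (g f : ℝ → ℝ) (c κ : ℝ) (hc : 0 < c) (hκ : 0 < κ)
    (hg_int : IntegrableOn g (Ioi (0:ℝ)))
    (hg_nn : ∀ t ∈ Ioi (0:ℝ), 0 ≤ g t)
    (hg_one : ∫ t in Ioi (0:ℝ), g t = 1)
    (hf_meas : AEStronglyMeasurable f (volume.restrict (Ioi (0:ℝ))))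
    (hf_nn : ∀ t ∈ Ioi (0:ℝ), 0 ≤ f t)
    (hf_le : ∀ t ∈ Ioi (0:ℝ), f t ≤ Real.exp t * g t)
    (hasym : Tendsto (fun t => f t / (c * t ^ (κ - 1))) (nhdsWithin 0 (Ioi 0)) (nhds 1)) :
    Tendsto (fun s : ℝ => s ^ κ * ∫ t in Ioi (0:ℝ), f t * Real.exp (-s * t)) atTop
      (nhds (c * Real.Gamma κ)) := by
  -- get δ with f t ≤ 2c t^(κ-1) on Ioo 0 δ
  obtain ⟨δ, hδ, hδ2⟩ : ∃ δ > 0, ∀ t ∈ Ioo (0:ℝ) δ, f t / (c * t ^ (κ - 1)) < 2 :=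
    (nhdsGT_basis (0:ℝ)).eventually_iff.mp (hasym.eventually_lt_const one_lt_two)
  have hfb : ∀ t ∈ Ioo (0:ℝ) δ, f t ≤ 2 * c * t ^ (κ - 1) := by
    intro t ht
    have hpos : 0 < c * t ^ (κ - 1) := mul_pos hc (rpow_pos_of_pos ht.1 _)
    have := (div_lt_iff₀ hpos).mp (hδ2 t ht)
    nlinarith
  -- integrability of f * exp(-s t) on Ioi 0, for s ≥ 1
  have hfint : ∀ s : ℝ, 1 ≤ s →
      IntegrableOn (fun t => f t * Real.exp (-s * t)) (Ioi (0:ℝ)) := by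
    intro s hs
    refine Integrable.mono hg_int
      (hf_meas.mul ((Real.continuous_exp.comp (continuous_const.mul continuous_id)).aestronglyMeasurable)) ?_
    filter_upwards [ae_restrict_mem measurableSet_Ioi] with t ht
    have h0 : 0 ≤ f t := hf_nn t ht
    have he : Real.exp (-s * t) ≤ Real.exp (-t) := by
      apply Real.exp_le_exp.mpr; nlinarith [ht.out]
    rw [Real.norm_eq_abs, Real.norm_eq_abs, abs_of_nonneg (mul_nonneg h0 (Real.exp_pos _).le),
      abs_of_nonneg (hg_nn t ht)]
    calc f t * Real.exp (-s * t) ≤ (Real.exp t * g t) * Real.exp (-t) :=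
          mul_le_mul (hf_le t ht) he (Real.exp_pos _).le
            (mul_nonneg (Real.exp_pos _).le (hg_nn t ht))
      _ = g t := by rw [mul_comm (Real.exp t), mul_assoc, ← Real.exp_add]; simp
  have hIccIoi : Ici δ ⊆ Ioi (0:ℝ) := fun x hx => lt_of_lt_of_le hδ hx
  have hIooIoi : Ioo (0:ℝ) δ ⊆ Ioi (0:ℝ) := Ioo_subset_Ioi_self
  -- split of integral
  have hsplit : ∀ s : ℝ, 1 ≤ s →
      ∫ t in Ioi (0:ℝ), f t * Real.exp (-s * t)
        = (∫ t in Ioo (0:ℝ) δ, f t * Real.exp (-s * t))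
          + ∫ t in Ici δ, f t * Real.exp (-s * t) := by
    intro s hs
    rw [← Ioo_union_Ici_eq_Ioi hδ]
    exact setIntegral_union (Set.disjoint_left.mpr fun a ha hb => (not_le.mpr ha.2) hb) measurableSet_Ici
      ((hfint s hs).mono_set hIooIoi) ((hfint s hs).mono_set hIccIoi)
  -- tail term tends to 0
  have htail : Tendsto (fun s : ℝ => s ^ κ * ∫ t in Ici δ, f t * Real.exp (-s * t))
      atTop (nhds 0) := by
    have hub : Tendsto (fun s : ℝ => Real.exp δ * (s ^ κ * Real.exp (-δ * s))) atTop (nhds 0) := by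
      have := (tendsto_rpow_mul_exp_neg_mul_atTop_nhds_zero κ δ hδ).const_mul (Real.exp δ)
      simpa using this
    refine tendsto_of_tendsto_of_tendsto_of_le_of_le' tendsto_const_nhds hub ?_ ?_
    · filter_upwards [eventually_ge_atTop (1:ℝ)] with s hs
      have h1 : 0 ≤ ∫ t in Ici δ, f t * Real.exp (-s * t) := by
        apply setIntegral_nonneg measurableSet_Ici
        intro t ht
        exact mul_nonneg (hf_nn t (hIccIoi ht)) (Real.exp_pos _).le
      have h2 : 0 ≤ s ^ κ := (rpow_pos_of_pos (lt_of_lt_of_le one_pos hs) _).le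
      positivity
    · filter_upwards [eventually_ge_atTop (1:ℝ)] with s hs
      have hsp : (0:ℝ) < s := lt_of_lt_of_le one_pos hs
      have key : ∫ t in Ici δ, f t * Real.exp (-s * t) ≤ Real.exp δ * Real.exp (-δ * s) := by
        have step1 : ∫ t in Ici δ, f t * Real.exp (-s * t)
            ≤ ∫ t in Ici δ, g t * (Real.exp δ * Real.exp (-δ * s)) := by
          apply setIntegral_mono_on ((hfint s hs).mono_set hIccIoi)
            ((hg_int.mono_set hIccIoi).mul_const _) measurableSet_Ici
          intro t ht
          have ht0 : (0:ℝ) < t := hIccIoi ht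
          have hexp : Real.exp t * Real.exp (-s * t) ≤ Real.exp δ * Real.exp (-δ * s) := by
            rw [← Real.exp_add, ← Real.exp_add]
            apply Real.exp_le_exp.mpr
            nlinarith [mul_nonneg (sub_nonneg.2 ht.out) (sub_nonneg.2 hs)]
          calc f t * Real.exp (-s * t) ≤ (Real.exp t * g t) * Real.exp (-s * t) :=
                mul_le_mul_of_nonneg_right (hf_le t ht0) (Real.exp_pos _).le
            _ = (Real.exp t * Real.exp (-s * t)) * g t := by ring
            _ ≤ (Real.exp δ * Real.exp (-δ * s)) * g t :=
                mul_le_mul_of_nonneg_right hexp (hg_nn t ht0)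
            _ = g t * (Real.exp δ * Real.exp (-δ * s)) := by ring
        have step2 : ∫ t in Ici δ, g t * (Real.exp δ * Real.exp (-δ * s))
            ≤ Real.exp δ * Real.exp (-δ * s) := by
          rw [integral_mul_const]
          have hle : ∫ t in Ici δ, g t ≤ 1 := by
            rw [← hg_one]
            apply setIntegral_mono_set hg_int
            · filter_upwards [ae_restrict_mem measurableSet_Ioi] with t ht using hg_nn t ht
            · exact HasSubset.Subset.eventuallyLE hIccIoi
          have := mul_le_mul_of_nonneg_right hle
            (mul_nonneg (Real.exp_pos δ).le (Real.exp_pos (-δ * s)).le)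
          linarith
        exact step1.trans step2
      calc s ^ κ * ∫ t in Ici δ, f t * Real.exp (-s * t)
          ≤ s ^ κ * (Real.exp δ * Real.exp (-δ * s)) := by
            apply mul_le_mul_of_nonneg_left key (rpow_pos_of_pos hsp _).le
        _ = Real.exp δ * (s ^ κ * Real.exp (-δ * s)) := by ring
  -- main term
  set f' : ℝ → ℝ := (Ioo (0:ℝ) δ).indicator f with hf'
  have hf'_aesm : AEStronglyMeasurable f' volume :=
    (aestronglyMeasurable_indicator_iff measurableSet_Ioo).mpr
      (hf_meas.mono_measure (Measure.restrict_mono hIooIoi le_rfl))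
  have hmain : Tendsto (fun s : ℝ => s ^ κ * ∫ t in Ioo (0:ℝ) δ, f t * Real.exp (-s * t))
      atTop (nhds (c * Real.Gamma κ)) := by
    -- rewrite via change of variables
    have hrw : ∀ s : ℝ, 1 ≤ s →
        s ^ κ * ∫ t in Ioo (0:ℝ) δ, f t * Real.exp (-s * t)
          = ∫ u in Ioi (0:ℝ), s ^ (κ - 1) * (f' (u / s) * Real.exp (-u)) := by
      intro s hs
      have hsp : (0:ℝ) < s := lt_of_lt_of_le one_pos hs
      have h1 : ∫ t in Ioo (0:ℝ) δ, f t * Real.exp (-s * t)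
          = ∫ t in Ioi (0:ℝ), f' t * Real.exp (-s * t) := by
        have : ∀ t, f' t * Real.exp (-s * t)
            = (Ioo (0:ℝ) δ).indicator (fun t => f t * Real.exp (-s * t)) t := by
          intro t
          simp only [hf', indicator_apply]
          split_ifs <;> simp
        rw [funext this, setIntegral_indicator measurableSet_Ioo]
        congr 1
        rw [inter_eq_right.mpr hIooIoi]
      have h2 : ∫ t in Ioi (0:ℝ), f' t * Real.exp (-s * t)
          = s⁻¹ * ∫ u in Ioi (0:ℝ), f' (u / s) * Real.exp (-u) := by
        have hcv := integral_comp_mul_left_Ioi (fun u => f' (u / s) * Real.exp (-u)) 0 hsp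
        simp only [mul_zero, smul_eq_mul] at hcv
        rw [← hcv]
        apply setIntegral_congr_fun measurableSet_Ioi
        intro x _
        beta_reduce
        rw [mul_div_cancel_left₀ x hsp.ne', neg_mul]
      rw [h1, h2, integral_const_mul, ← mul_assoc]
      congr 1
      rw [show s⁻¹ = s ^ (-1 : ℝ) by rw [Real.rpow_neg_one], ← Real.rpow_add hsp]
      ring_nf
    -- dominated convergence
    have hGamma : c * Real.Gamma κ = ∫ u in Ioi (0:ℝ), c * (u ^ (κ - 1) * Real.exp (-u)) := by
      rw [Real.Gamma_eq_integral hκ, ← integral_const_mul]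
      congr 1; ext u; ring
    rw [hGamma]
    have hdct : Tendsto (fun s : ℝ => ∫ u in Ioi (0:ℝ), s ^ (κ - 1) * (f' (u / s) * Real.exp (-u)))
        atTop (nhds (∫ u in Ioi (0:ℝ), c * (u ^ (κ - 1) * Real.exp (-u)))) := by
      apply tendsto_integral_filter_of_dominated_convergence
        (fun u => 2 * c * (u ^ (κ - 1) * Real.exp (-u)))
      · -- measurability
        filter_upwards [eventually_ge_atTop (1:ℝ)] with s hs
        have hsp : (0:ℝ) < s := lt_of_lt_of_le one_pos hs
        have hqmp : Measure.QuasiMeasurePreserving (fun u : ℝ => u / s) volume volume := by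
          have := Measure.quasiMeasurePreserving_smul (μ := (volume : Measure ℝ)) (r := s⁻¹)
            (inv_ne_zero hsp.ne')
          convert this using 2 with u
          rw [smul_eq_mul]; ring
        exact (((hf'_aesm.comp_quasiMeasurePreserving hqmp).mul
          ((Real.continuous_exp.comp continuous_neg).aestronglyMeasurable)).const_mul _).restrict
      · -- bound
        filter_upwards [eventually_ge_atTop (1:ℝ)] with s hs
        have hsp : (0:ℝ) < s := lt_of_lt_of_le one_pos hs
        filter_upwards [ae_restrict_mem measurableSet_Ioi] with u hu
        have hu0 : (0:ℝ) < u := hu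
        rw [Real.norm_eq_abs]
        by_cases hmem : u / s ∈ Ioo (0:ℝ) δ
        · have hval : f' (u / s) = f (u / s) := indicator_of_mem hmem f
          have hfnn : 0 ≤ f (u / s) := hf_nn _ hmem.1
          rw [hval, abs_of_nonneg (by positivity)]
          have hle : f (u / s) ≤ 2 * c * (u / s) ^ (κ - 1) := hfb _ hmem
          have hpow : (u / s) ^ (κ - 1) = u ^ (κ - 1) / s ^ (κ - 1) :=
            Real.div_rpow hu0.le hsp.le _
          have hs1 : (0:ℝ) < s ^ (κ - 1) := rpow_pos_of_pos hsp _
          calc s ^ (κ - 1) * (f (u / s) * Real.exp (-u))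
              ≤ s ^ (κ - 1) * ((2 * c * (u ^ (κ - 1) / s ^ (κ - 1))) * Real.exp (-u)) := by
                apply mul_le_mul_of_nonneg_left _ hs1.le
                apply mul_le_mul_of_nonneg_right _ (Real.exp_pos _).le
                rw [← hpow]; exact hle
            _ = 2 * c * (u ^ (κ - 1) * Real.exp (-u)) := by
                field_simp
        · have hval : f' (u / s) = 0 := indicator_of_notMem hmem f
          rw [hval]
          simp only [zero_mul, mul_zero, abs_zero]
          have : 0 < u ^ (κ - 1) := rpow_pos_of_pos hu0 _
          positivity
      · -- integrable bound
        have hGc := (Real.GammaIntegral_convergent hκ).const_mul (2 * c)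
        exact hGc.congr (Filter.Eventually.of_forall fun u => by ring)
      · -- pointwise limit
        filter_upwards [ae_restrict_mem measurableSet_Ioi] with u hu
        have hu0 : (0:ℝ) < u := hu
        have hts : Tendsto (fun s : ℝ => u / s) atTop (nhdsWithin 0 (Ioi 0)) := by
          rw [tendsto_nhdsWithin_iff]
          constructor
          · exact tendsto_const_nhds.div_atTop tendsto_id
          · filter_upwards [eventually_gt_atTop (0:ℝ)] with s hs
            exact div_pos hu0 hs
        have hcomp : Tendsto (fun s : ℝ => f (u / s) / (c * (u / s) ^ (κ - 1)))
            atTop (nhds 1) := hasym.comp hts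
        have hmul : Tendsto (fun s : ℝ => (f (u / s) / (c * (u / s) ^ (κ - 1)))
            * (c * (u ^ (κ - 1) * Real.exp (-u)))) atTop
            (nhds (c * (u ^ (κ - 1) * Real.exp (-u)))) := by
          have := hcomp.mul_const (c * (u ^ (κ - 1) * Real.exp (-u)))
          simpa using this
        apply Tendsto.congr' _ hmul
        filter_upwards [eventually_gt_atTop (max 1 (u / δ))] with s hs
        have hs1 : (1:ℝ) < s := lt_of_le_of_lt (le_max_left _ _) hs
        have hsp : (0:ℝ) < s := lt_trans one_pos hs1
        have hmem : u / s ∈ Ioo (0:ℝ) δ := by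
          constructor
          · exact div_pos hu0 hsp
          · rw [div_lt_iff₀ hsp]
            have : u / δ < s := lt_of_le_of_lt (le_max_right _ _) hs
            calc u = (u / δ) * δ := by field_simp
              _ < s * δ := by apply mul_lt_mul_of_pos_right this hδ
              _ = δ * s := by ring
        have hval : f' (u / s) = f (u / s) := indicator_of_mem hmem f
        have hpow : (u / s) ^ (κ - 1) = u ^ (κ - 1) / s ^ (κ - 1) :=
          Real.div_rpow hu0.le hsp.le _
        have hs1' : (0:ℝ) < s ^ (κ - 1) := rpow_pos_of_pos hsp _
        have hu1 : (0:ℝ) < u ^ (κ - 1) := rpow_pos_of_pos hu0 _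
        rw [hpow]
        rw [hval]
        field_simp
    apply hdct.congr'
    filter_upwards [eventually_ge_atTop (1:ℝ)] with s hs
    exact (hrw s hs).symm
  -- combine
  have hcomb := hmain.add htail
  rw [add_zero] at hcomb
  apply hcomb.congr'
  filter_upwards [eventually_ge_atTop (1:ℝ)] with s hs
  rw [hsplit s hs]
  ring

theorem waxman_mean_length_asymptotics (g : ℝ → ℝ) (c k : ℝ)
    (hc : 0 < c) (hk : 0 < k)
    (hnn : ∀ t ∈ Ioi (0:ℝ), 0 ≤ g t)
    (hone : ∫ t in Ioi (0:ℝ), g t = 1)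
    (hasym : Tendsto (fun t => g t / (c * t ^ (k - 1))) (nhdsWithin 0 (Ioi 0)) (nhds 1)) :
    Tendsto (fun s : ℝ => s * ((∫ t in Ioi (0:ℝ), t * g t * Real.exp (-s * t)) /
        (∫ t in Ioi (0:ℝ), g t * Real.exp (-s * t)))) atTop (nhds k) := by
  have hg_int : IntegrableOn g (Ioi (0:ℝ)) := by
    by_contra h
    rw [MeasureTheory.integral_undef h] at hone
    norm_num at hone
  have hg_meas : AEStronglyMeasurable g (volume.restrict (Ioi (0:ℝ))) := hg_int.aestronglyMeasurable
  -- apply key lemma twice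
  have hA : Tendsto (fun s : ℝ => s ^ k * ∫ t in Ioi (0:ℝ), g t * Real.exp (-s * t)) atTop
      (nhds (c * Real.Gamma k)) := by
    apply laplace_key g g c k hc hk hg_int hnn hone hg_meas hnn _ hasym
    intro t ht
    exact le_mul_of_one_le_left (hnn t ht) (Real.one_le_exp (le_of_lt ht))
  have hB : Tendsto (fun s : ℝ => s ^ (k + 1) * ∫ t in Ioi (0:ℝ), t * g t * Real.exp (-s * t))
      atTop (nhds (c * Real.Gamma (k + 1))) := by
    apply laplace_key g (fun t => t * g t) c (k + 1) hc (by linarith) hg_int hnn hone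
      (continuous_id.aestronglyMeasurable.mul hg_meas)
    · intro t ht
      exact mul_nonneg (le_of_lt ht) (hnn t ht)
    · intro t ht
      apply mul_le_mul_of_nonneg_right _ (hnn t ht)
      linarith [Real.add_one_le_exp t]
    · have : Tendsto (fun t => g t / (c * t ^ (k - 1))) (nhdsWithin 0 (Ioi 0)) (nhds 1) := hasym
      apply Tendsto.congr' _ this
      filter_upwards [self_mem_nhdsWithin] with t (ht : (0:ℝ) < t)
      beta_reduce
      have h1 : t ^ (k + 1 - 1) = t * t ^ (k - 1) := by
        rw [show k + 1 - 1 = 1 + (k - 1) by ring, Real.rpow_add ht, Real.rpow_one]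
      rw [h1]
      have h2 : (0:ℝ) < t ^ (k - 1) := rpow_pos_of_pos ht _
      field_simp
  have hΓpos : 0 < Real.Gamma k := Real.Gamma_pos_of_pos hk
  have hne : c * Real.Gamma k ≠ 0 := (mul_pos hc hΓpos).ne'
  have hdiv := hB.div hA hne
  have hval : c * Real.Gamma (k + 1) / (c * Real.Gamma k) = k := by
    rw [Real.Gamma_add_one hk.ne']
    field_simp
  rw [hval] at hdiv
  apply hdiv.congr'
  filter_upwards [eventually_ge_atTop (1:ℝ)] with s hs
  have hsp : (0:ℝ) < s := lt_of_lt_of_le one_pos hs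
  have hsk : (0:ℝ) < s ^ k := rpow_pos_of_pos hsp _
  have h1 : s ^ (k + 1) = s ^ k * s := by
    rw [Real.rpow_add hsp, Real.rpow_one]
  simp only [Pi.div_apply]
  rw [h1]
  set N := ∫ t in Ioi (0:ℝ), t * g t * Real.exp (-s * t)
  set F := ∫ t in Ioi (0:ℝ), g t * Real.exp (-s * t)
  rw [show s ^ k * s * N = s ^ k * (s * N) by ring, mul_div_mul_left _ _ hsk.ne',
    mul_div_assoc]
end
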